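/- Let p ∈ ℝ^({0,1}^n) be a probability distribution (nonnegative, summing to 1), and let p' ∈ ℝ^({0,1}^n) satisfy ‖p' − p‖₁ ≤ δ for some δ < 1. Then S := Σ_x p'_x ≥ 1 − δ > 0, and the probability distribution (1/S)·Fix(p') satisfies ‖(1/S)·Fix(p') − p‖₁ ≤ 4δ/(1−δ), where ‖v‖₁ = Σ_x |v_x|. -/

import Mathlib

open Finset

noncomputable section

/-- The recursive procedure `Fix` on vectors `p ∈ ℝ^({0,1}^n)` (only meaningful when
`Σ p > 0`). -/
def fixVec : (n : ℕ) → ((Fin n → Bool) → ℝ) → ((Fin n → Bool) → ℝ)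
  | 0, p => p
  | n + 1, p =>
    let a : (Fin n → Bool) → ℝ := fun x => p (Fin.cons false x)
    let b : (Fin n → Bool) → ℝ := fun x => p (Fin.cons true x)
    let Sa := ∑ x : Fin n → Bool, a x
    let Sb := ∑ x : Fin n → Bool, b x
    let Sp := ∑ x : Fin (n + 1) → Bool, p x
    fun x =>
      if 0 < Sa ∧ 0 < Sb then
        (if x 0 = false then fixVec n a (Fin.tail x) else fixVec n b (Fin.tail x))
      else if 0 < Sa then
        (if x 0 = false then (Sp / Sa) * fixVec n a (Fin.tail x) else 0)
      else
        (if x 0 = true then (Sp / Sb) * fixVec n b (Fin.tail x) else 0)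

lemma sum_split (n : ℕ) (f : (Fin (n+1) → Bool) → ℝ) :
    ∑ x : Fin (n+1) → Bool, f x
      = (∑ x : Fin n → Bool, f (Fin.cons false x))
        + ∑ x : Fin n → Bool, f (Fin.cons true x) := by
  rw [← (Fin.consEquiv (fun _ => Bool)).sum_comp f, Fintype.sum_prod_type, Fintype.sum_bool]
  simp [Fin.consEquiv, add_comm]

lemma fixVec_nonneg_sum : ∀ (n : ℕ) (q : (Fin n → Bool) → ℝ),
    0 < ∑ x : Fin n → Bool, q x →
    (∀ x, 0 ≤ fixVec n q x) ∧
      (∑ x : Fin n → Bool, fixVec n q x = ∑ x : Fin n → Bool, q x) := by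
  intro n
  induction n with
  | zero =>
    intro q hq
    refine ⟨fun x => ?_, rfl⟩
    have h1 : (∑ y : Fin 0 → Bool, q y) = q x := by
      rw [Fintype.sum_unique]; congr 1; exact Subsingleton.elim _ _
    rw [h1] at hq; exact le_of_lt hq
  | succ n ih =>
    intro q hq
    set a : (Fin n → Bool) → ℝ := fun x => q (Fin.cons false x) with ha
    set b : (Fin n → Bool) → ℝ := fun x => q (Fin.cons true x) with hb
    have hsplit : ∑ x : Fin (n+1) → Bool, q x = (∑ x, a x) + ∑ x, b x := sum_split n q
    by_cases hA : 0 < ∑ x, a x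
    · by_cases hB : 0 < ∑ x, b x
      · obtain ⟨hna, hsa⟩ := ih a hA
        obtain ⟨hnb, hsb⟩ := ih b hB
        constructor
        · intro x
          simp only [ha, hb] at hA hB
          simp only [fixVec, hA, hB, and_self, if_true]
          split <;> [exact hna _; exact hnb _]
        · rw [sum_split n (fixVec (n+1) q), hsplit]
          have e1 : ∀ x, fixVec (n+1) q (Fin.cons false x) = fixVec n a x := by
            intro x; simp only [ha, hb] at hA hB; simp [fixVec, hA, hB, ha, hb]
          have e2 : ∀ x, fixVec (n+1) q (Fin.cons true x) = fixVec n b x := by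
            intro x; simp only [ha, hb] at hA hB; simp [fixVec, hA, hB, ha, hb]
          simp only [e1, e2]
          rw [hsa, hsb]
      · obtain ⟨hna, hsa⟩ := ih a hA
        have hSq : (0:ℝ) < ∑ x : Fin (n+1) → Bool, q x := hq
        have hratio : 0 ≤ (∑ x : Fin (n+1) → Bool, q x) / (∑ x, a x) :=
          div_nonneg (le_of_lt hSq) (le_of_lt hA)
        constructor
        · intro x
          simp only [ha, hb] at hA hB
          simp only [fixVec, hA, hB, and_false, if_false, if_true]
          split
          · exact mul_nonneg hratio (hna _)
          · exact le_refl 0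
        · rw [sum_split n (fixVec (n+1) q)]
          have e1 : ∀ x, fixVec (n+1) q (Fin.cons false x)
              = ((∑ y : Fin (n+1) → Bool, q y) / (∑ y, a y)) * fixVec n a x := by
            intro x; simp only [ha, hb] at hA hB; simp [fixVec, hA, hB, ha, hb]
          have e2 : ∀ x, fixVec (n+1) q (Fin.cons true x) = 0 := by
            intro x; simp only [ha, hb] at hA hB; simp [fixVec, hA, hB, ha, hb]
          simp only [e1, e2]
          rw [← Finset.mul_sum, hsa, Finset.sum_const_zero, add_zero]
          field_simp
    · have hB : 0 < ∑ x, b x := by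
        by_contra hB
        push_neg at hB
        rw [hsplit] at hq
        push_neg at hA
        linarith
      obtain ⟨hnb, hsb⟩ := ih b hB
      have hSq : (0:ℝ) < ∑ x : Fin (n+1) → Bool, q x := hq
      have hratio : 0 ≤ (∑ x : Fin (n+1) → Bool, q x) / (∑ x, b x) :=
        div_nonneg (le_of_lt hSq) (le_of_lt hB)
      constructor
      · intro x
        simp only [ha] at hA
        simp only [fixVec, hA, false_and, if_false]
        split
        · exact mul_nonneg hratio (hnb _)
        · exact le_refl 0
      · rw [sum_split n (fixVec (n+1) q)]
        have e1 : ∀ x, fixVec (n+1) q (Fin.cons false x) = 0 := by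
          intro x; simp only [ha] at hA; simp [fixVec, hA, ha, hb]
        have e2 : ∀ x, fixVec (n+1) q (Fin.cons true x)
            = ((∑ y : Fin (n+1) → Bool, q y) / (∑ y, b y)) * fixVec n b x := by
          intro x; simp only [ha] at hA; simp [fixVec, hA, ha, hb]
        simp only [e1, e2]
        rw [← Finset.mul_sum, hsb, Finset.sum_const_zero, zero_add]
        field_simp

lemma rescale_est (n : ℕ) (pa a : (Fin n → Bool) → ℝ) (c : ℝ)
    (hfa : ∀ x, 0 ≤ fixVec n a x) :
    ∑ x : Fin n → Bool, |c * fixVec n a x - pa x|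
      ≤ (∑ x, |fixVec n a x - pa x|) + |c - 1| * ∑ x, fixVec n a x := by
  rw [Finset.mul_sum, ← Finset.sum_add_distrib]
  apply Finset.sum_le_sum
  intro x _
  have h : c * fixVec n a x - pa x = (fixVec n a x - pa x) + (c - 1) * fixVec n a x := by ring
  rw [h]
  calc |(fixVec n a x - pa x) + (c - 1) * fixVec n a x|
      ≤ |fixVec n a x - pa x| + |(c - 1) * fixVec n a x| := abs_add_le _ _
    _ = |fixVec n a x - pa x| + |c - 1| * fixVec n a x := by
        rw [abs_mul, abs_of_nonneg (hfa x)]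

lemma dead_est (n : ℕ) (pb b : (Fin n → Bool) → ℝ) (hpb : ∀ x, 0 ≤ pb x)
    (hSb : ¬ 0 < ∑ x : Fin n → Bool, b x) :
    (∑ x : Fin n → Bool, pb x ≤ ∑ x, |b x - pb x|) ∧
      |∑ x : Fin n → Bool, b x| ≤ ∑ x, |b x - pb x| := by
  push_neg at hSb
  have h1 : ∑ x : Fin n → Bool, (pb x - b x) ≤ ∑ x, |b x - pb x| := by
    apply Finset.sum_le_sum
    intro x _
    rw [abs_sub_comm]
    exact le_abs_self _
  rw [Finset.sum_sub_distrib] at h1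
  have hpbs : 0 ≤ ∑ x : Fin n → Bool, pb x := Finset.sum_nonneg (fun x _ => hpb x)
  constructor
  · linarith
  · rw [abs_of_nonpos hSb]; linarith

lemma fixVec_close : ∀ (n : ℕ) (p q : (Fin n → Bool) → ℝ), (∀ x, 0 ≤ p x) →
    0 < ∑ x : Fin n → Bool, q x →
    ∑ x : Fin n → Bool, |fixVec n q x - p x| ≤ 3 * ∑ x : Fin n → Bool, |q x - p x| := by
  intro n
  induction n with
  | zero =>
    intro p q hp hq
    have h : (0:ℝ) ≤ ∑ x : Fin 0 → Bool, |q x - p x| :=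
      Finset.sum_nonneg (fun x _ => abs_nonneg _)
    have h2 : ∑ x : Fin 0 → Bool, |fixVec 0 q x - p x| = ∑ x : Fin 0 → Bool, |q x - p x| := rfl
    rw [h2]; linarith
  | succ n ih =>
    intro p q hp hq
    set a : (Fin n → Bool) → ℝ := fun x => q (Fin.cons false x) with ha
    set b : (Fin n → Bool) → ℝ := fun x => q (Fin.cons true x) with hb
    set pa : (Fin n → Bool) → ℝ := fun x => p (Fin.cons false x) with hpa
    set pb : (Fin n → Bool) → ℝ := fun x => p (Fin.cons true x) with hpb
    have hpan : ∀ x, 0 ≤ pa x := fun x => hp _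
    have hpbn : ∀ x, 0 ≤ pb x := fun x => hp _
    have hsplitq : ∑ x : Fin (n+1) → Bool, q x = (∑ x, a x) + ∑ x, b x := sum_split n q
    have hLHS : ∑ x : Fin (n+1) → Bool, |fixVec (n+1) q x - p x|
        = (∑ x, |fixVec (n+1) q (Fin.cons false x) - pa x|)
          + ∑ x, |fixVec (n+1) q (Fin.cons true x) - pb x| :=
      sum_split n (fun x => |fixVec (n+1) q x - p x|)
    have hRHS : ∑ x : Fin (n+1) → Bool, |q x - p x|
        = (∑ x, |a x - pa x|) + ∑ x, |b x - pb x| :=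
      sum_split n (fun x => |q x - p x|)
    have habsa : (0:ℝ) ≤ ∑ x, |a x - pa x| := Finset.sum_nonneg (fun x _ => abs_nonneg _)
    have habsb : (0:ℝ) ≤ ∑ x, |b x - pb x| := Finset.sum_nonneg (fun x _ => abs_nonneg _)
    by_cases hA : 0 < ∑ x, a x
    · by_cases hB : 0 < ∑ x, b x
      · have e1 : ∀ x, fixVec (n+1) q (Fin.cons false x) = fixVec n a x := by
          intro x; simp only [ha, hb] at hA hB; simp [fixVec, hA, hB, ha, hb]
        have e2 : ∀ x, fixVec (n+1) q (Fin.cons true x) = fixVec n b x := by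
          intro x; simp only [ha, hb] at hA hB; simp [fixVec, hA, hB, ha, hb]
        rw [hLHS, hRHS]
        simp only [e1, e2]
        have i1 := ih pa a hpan hA
        have i2 := ih pb b hpbn hB
        linarith
      · obtain ⟨hfa, hsa⟩ := fixVec_nonneg_sum n a hA
        obtain ⟨hd1, hd2⟩ := dead_est n pb b hpbn hB
        set c : ℝ := (∑ y : Fin (n+1) → Bool, q y) / (∑ y, a y) with hc
        have e1 : ∀ x, fixVec (n+1) q (Fin.cons false x) = c * fixVec n a x := by
          intro x; simp only [ha, hb] at hA hB; simp [fixVec, hA, hB, ha, hb, hc]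
        have e2 : ∀ x, fixVec (n+1) q (Fin.cons true x) = 0 := by
          intro x; simp only [ha, hb] at hA hB; simp [fixVec, hA, hB, ha, hb]
        rw [hLHS, hRHS]
        simp only [e1, e2]
        have t1 : ∑ x : Fin n → Bool, |(0:ℝ) - pb x| = ∑ x, pb x := by
          apply Finset.sum_congr rfl
          intro x _
          rw [zero_sub, abs_neg, abs_of_nonneg (hpbn x)]
        have t2 := rescale_est n pa a c hfa
        have t3 : |c - 1| * ∑ x, fixVec n a x = |∑ x, b x| := by
          rw [hsa, hc, div_sub_one (ne_of_gt hA), abs_div, abs_of_pos hA,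
            div_mul_cancel₀ _ (ne_of_gt hA), hsplitq]
          ring_nf
        rw [t3] at t2
        have i1 := ih pa a hpan hA
        rw [t1]
        linarith
    · have hB : 0 < ∑ x, b x := by
        by_contra hB
        push_neg at hB hA
        rw [hsplitq] at hq
        linarith
      obtain ⟨hfb, hsb⟩ := fixVec_nonneg_sum n b hB
      obtain ⟨hd1, hd2⟩ := dead_est n pa a hpan hA
      set c : ℝ := (∑ y : Fin (n+1) → Bool, q y) / (∑ y, b y) with hc
      have e1 : ∀ x, fixVec (n+1) q (Fin.cons false x) = 0 := by
        intro x; simp only [ha] at hA; simp [fixVec, hA, ha, hb]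
      have e2 : ∀ x, fixVec (n+1) q (Fin.cons true x) = c * fixVec n b x := by
        intro x; simp only [ha] at hA; simp [fixVec, hA, ha, hb, hc]
      rw [hLHS, hRHS]
      simp only [e1, e2]
      have t1 : ∑ x : Fin n → Bool, |(0:ℝ) - pa x| = ∑ x, pa x := by
        apply Finset.sum_congr rfl
        intro x _
        rw [zero_sub, abs_neg, abs_of_nonneg (hpan x)]
      have t2 := rescale_est n pb b c hfb
      have t3 : |c - 1| * ∑ x, fixVec n b x = |∑ x, a x| := by
        rw [hsb, hc, div_sub_one (ne_of_gt hB), abs_div, abs_of_pos hB,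
          div_mul_cancel₀ _ (ne_of_gt hB), hsplitq]
        ring_nf
      rw [t3] at t2
      have i2 := ih pb b hpbn hB
      rw [t1]
      linarith

/-- if `p` is a probability distribution and `‖p' − p‖₁ ≤ δ < 1`, then
`S = Σ_x p'_x ≥ 1 − δ > 0` and `‖(1/S)·Fix(p') − p‖₁ ≤ 4δ/(1−δ)`. -/
theorem fixVec_sampling_error (n : ℕ) (p p' : (Fin n → Bool) → ℝ)
    (hpos : ∀ x, 0 ≤ p x) (hsum : ∑ x : Fin n → Bool, p x = 1)
    (δ : ℝ) (hδ : δ < 1) (hdist : ∑ x : Fin n → Bool, |p' x - p x| ≤ δ) :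
    (1 - δ ≤ ∑ x : Fin n → Bool, p' x) ∧ (0 < 1 - δ) ∧
    ∑ x : Fin n → Bool,
        |(1 / (∑ y : Fin n → Bool, p' y)) * fixVec n p' x - p x|
      ≤ 4 * δ / (1 - δ) := by
  set S : ℝ := ∑ y : Fin n → Bool, p' y with hS
  have hdlow : ∑ x : Fin n → Bool, (p x - p' x) ≤ ∑ x : Fin n → Bool, |p' x - p x| := by
    apply Finset.sum_le_sum
    intro x _
    rw [abs_sub_comm]
    exact le_abs_self _
  have hdhigh : ∑ x : Fin n → Bool, (p' x - p x) ≤ ∑ x : Fin n → Bool, |p' x - p x| := by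
    apply Finset.sum_le_sum
    intro x _
    exact le_abs_self _
  rw [Finset.sum_sub_distrib, hsum] at hdlow hdhigh
  have h1 : 1 - δ ≤ S := by linarith
  have h2 : (0:ℝ) < 1 - δ := by linarith
  have hSpos : 0 < S := lt_of_lt_of_le h2 h1
  refine ⟨h1, h2, ?_⟩
  have hδ0 : 0 ≤ δ :=
    le_trans (Finset.sum_nonneg (fun x _ => abs_nonneg _)) hdist
  have hclose := fixVec_close n p p' hpos hSpos
  have hstep : ∑ x : Fin n → Bool, |(1 / S) * fixVec n p' x - p x|
      ≤ (1 / S) * (∑ x : Fin n → Bool, |fixVec n p' x - p x|)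
        + |1 / S - 1| * ∑ x : Fin n → Bool, p x := by
    rw [Finset.mul_sum, Finset.mul_sum, ← Finset.sum_add_distrib]
    apply Finset.sum_le_sum
    intro x _
    have h : (1 / S) * fixVec n p' x - p x
        = (1 / S) * (fixVec n p' x - p x) + (1 / S - 1) * p x := by ring
    rw [h]
    calc |(1 / S) * (fixVec n p' x - p x) + (1 / S - 1) * p x|
        ≤ |(1 / S) * (fixVec n p' x - p x)| + |(1 / S - 1) * p x| := abs_add_le _ _
      _ = (1 / S) * |fixVec n p' x - p x| + |1 / S - 1| * p x := by
          rw [abs_mul, abs_mul, abs_of_pos (by positivity : (0:ℝ) < 1 / S),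
            abs_of_nonneg (hpos x)]
  rw [hsum, mul_one] at hstep
  have habs : |1 / S - 1| ≤ δ / S := by
    rw [abs_le]
    constructor
    · rw [div_sub_one (ne_of_gt hSpos)]
      rw [neg_le, ← neg_div]
      apply div_le_div_of_nonneg_right ?_ hSpos.le
      · linarith
    · rw [div_sub_one (ne_of_gt hSpos)]
      apply div_le_div_of_nonneg_right ?_ hSpos.le
      · linarith
  have hmain : ∑ x : Fin n → Bool, |(1 / S) * fixVec n p' x - p x| ≤ 4 * δ / S := by
    have hsum3 : (1 / S) * (∑ x : Fin n → Bool, |fixVec n p' x - p x|) ≤ (1 / S) * (3 * δ) := by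
      apply mul_le_mul_of_nonneg_left _ (by positivity)
      linarith
    have : (1 / S) * (3 * δ) + δ / S = 4 * δ / S := by ring
    linarith [hstep, hsum3, habs]
  calc ∑ x : Fin n → Bool, |(1 / S) * fixVec n p' x - p x| ≤ 4 * δ / S := hmain
    _ ≤ 4 * δ / (1 - δ) := by
        apply div_le_div_of_nonneg_left (by linarith) h2 h1

end
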